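/- Let b ∈ (0,1) and t ∈ ℝ. Then there is a constant c = c(b) such that for all x ∈ ℝ, 𝒟^b(e^{-i t x|x|})(x) ≤ c(|t|^{b/2} + |t|^b |x|^b), where 𝒟^b g(x) = (∫_ℝ |g(x)-g(y)|²/|x-y|^{1+2b} dy)^{1/2}. -/

import Mathlib

open MeasureTheory
open scoped ENNReal

/-- The Stein derivative of order `b`:
`𝒟^b h(x) = (∫ |h(x)-h(y)|² / |x-y|^{1+2b} dy)^{1/2}`. -/
noncomputable def steinD (b : ℝ) (h : ℝ → ℂ) (x : ℝ) : ℝ≥0∞ :=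
  (∫⁻ y : ℝ, (‖h x - h y‖₊ : ℝ≥0∞) ^ 2 / ENNReal.ofReal |x - y| ^ (1 + 2 * b)) ^ ((1 : ℝ) / 2)

open Real Set

lemma norm_exp_sub_exp_le' (a c : ℝ) :
    ‖Complex.exp (a * Complex.I) - Complex.exp (c * Complex.I)‖ ≤ |a - c| := by
  have h1 : Complex.exp (a * Complex.I) - Complex.exp (c * Complex.I)
      = ((Real.cos a - Real.cos c : ℝ) : ℂ) + ((Real.sin a - Real.sin c : ℝ) : ℂ) * Complex.I := by
    rw [Complex.exp_mul_I, Complex.exp_mul_I]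
    push_cast
    ring
  rw [h1, Complex.norm_add_mul_I]
  have e2 : Real.cos (a - c) = 1 - 2 * Real.sin ((a - c) / 2) ^ 2 := by
    have h2 := Real.cos_two_mul' ((a - c) / 2)
    have h3 := Real.sin_sq_add_cos_sq ((a - c) / 2)
    have : 2 * ((a - c) / 2) = a - c := by ring
    rw [this] at h2
    nlinarith
  have e1 : (Real.cos a - Real.cos c) ^ 2 + (Real.sin a - Real.sin c) ^ 2
      = 2 - 2 * Real.cos (a - c) := by
    rw [Real.cos_sub]
    nlinarith [Real.sin_sq_add_cos_sq a, Real.sin_sq_add_cos_sq c]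
  have e3 : |Real.sin ((a - c) / 2)| ≤ |(a - c) / 2| := Real.abs_sin_le_abs
  have e4 : Real.sin ((a - c) / 2) ^ 2 ≤ ((a - c) / 2) ^ 2 := by
    have := mul_self_le_mul_self (abs_nonneg (Real.sin ((a - c) / 2))) e3
    rwa [abs_mul_abs_self, abs_mul_abs_self, ← sq, ← sq] at this
  have key : (Real.cos a - Real.cos c) ^ 2 + (Real.sin a - Real.sin c) ^ 2 ≤ (a - c) ^ 2 := by
    nlinarith
  have : Real.sqrt ((Real.cos a - Real.cos c) ^ 2 + (Real.sin a - Real.sin c) ^ 2) ≤ Real.sqrt ((a - c) ^ 2) := Real.sqrt_le_sqrt key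
  rwa [Real.sqrt_sq_eq_abs] at this

lemma abs_mul_abs_sub_le (a c : ℝ) : abs (a * |a| - c * |c|) ≤ (|a| + |c|) * |a - c| := by
  have h : a * |a| - c * |c| = a * (|a| - |c|) + |c| * (a - c) := by ring
  calc abs (a * |a| - c * |c|) = abs (a * (|a| - |c|) + |c| * (a - c)) := by rw [h]
    _ ≤ abs (a * (|a| - |c|)) + abs (|c| * (a - c)) := abs_add_le _ _
    _ = |a| * abs (|a| - |c|) + |c| * |a - c| := by rw [abs_mul, abs_mul, abs_abs]
    _ ≤ |a| * |a - c| + |c| * |a - c| := by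
        have h2 : abs (|a| - |c|) ≤ |a - c| := abs_abs_sub_abs_le_abs_sub a c
        nlinarith [abs_nonneg a, abs_nonneg c, abs_nonneg (a - c), abs_nonneg (|a| - |c|)]
    _ = (|a| + |c|) * |a - c| := by ring


noncomputable def psiBO (b t x : ℝ) : ℝ → ℝ :=
  fun r => min 4 (t ^ 2 * (2 * |x| + r) ^ 2 * r ^ 2) / r ^ (1 + 2 * b)

lemma psiBO_nonneg {b t x r : ℝ} (hr : 0 ≤ r) : 0 ≤ psiBO b t x r := by
  rcases eq_or_lt_of_le hr with h | h
  · simp [psiBO, ← h]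
  · exact div_nonneg (le_min (by norm_num) (by positivity)) (Real.rpow_nonneg hr _)

lemma measurable_psiBO (b t x : ℝ) : Measurable (psiBO b t x) := by
  unfold psiBO
  fun_prop

lemma psiBO_le_near {b t x r : ℝ} (hr : 0 < r) :
    psiBO b t x r ≤ 2 * t ^ 2 * (4 * x ^ 2 * r ^ (1 - 2 * b) + r ^ (3 - 2 * b)) := by
  have hd : (0:ℝ) < r ^ (1 + 2 * b) := Real.rpow_pos_of_pos hr _
  have h1 : psiBO b t x r ≤ (t ^ 2 * (2 * |x| + r) ^ 2 * r ^ 2) / r ^ (1 + 2 * b) :=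
    (div_le_div_iff_of_pos_right hd).2 (min_le_right _ _)
  have h2 : (2 * |x| + r) ^ 2 ≤ 2 * (4 * x ^ 2 + r ^ 2) := by
    nlinarith [sq_abs x, sq_nonneg (2 * |x| - r)]
  have h3 : (t ^ 2 * (2 * |x| + r) ^ 2 * r ^ 2) / r ^ (1 + 2 * b)
      ≤ (2 * t ^ 2 * (4 * x ^ 2 + r ^ 2) * r ^ 2) / r ^ (1 + 2 * b) := by
    apply (div_le_div_iff_of_pos_right hd).2
    nlinarith [mul_le_mul_of_nonneg_left h2 (mul_nonneg (sq_nonneg t) (sq_nonneg r))]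
  have e1 : r ^ (1 - 2 * b) = r ^ (2:ℕ) / r ^ (1 + 2 * b) := by
    rw [← Real.rpow_natCast r 2, ← Real.rpow_sub hr]
    norm_num
    congr 1
    ring
  have e2 : r ^ (3 - 2 * b) = r ^ (4:ℕ) / r ^ (1 + 2 * b) := by
    rw [← Real.rpow_natCast r 4, ← Real.rpow_sub hr]
    norm_num
    congr 1
    ring
  have e3 : (2 * t ^ 2 * (4 * x ^ 2 + r ^ 2) * r ^ 2) / r ^ (1 + 2 * b)
      = 2 * t ^ 2 * (4 * x ^ 2 * r ^ (1 - 2 * b) + r ^ (3 - 2 * b)) := by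
    rw [e1, e2]
    field_simp
  linarith [h1.trans h3, le_of_eq e3]

lemma psiBO_le_far {b t x r : ℝ} (hr : 0 < r) :
    psiBO b t x r ≤ 4 * r ^ (-(1 + 2 * b)) := by
  have hd : (0:ℝ) < r ^ (1 + 2 * b) := Real.rpow_pos_of_pos hr _
  have h1 : psiBO b t x r ≤ 4 / r ^ (1 + 2 * b) := (div_le_div_iff_of_pos_right hd).2 (min_le_left _ _)
  rwa [Real.rpow_neg hr.le, ← div_eq_mul_inv]

lemma rpow_integral_Ioc {q R : ℝ} (hq : -1 < q) (hR : 0 < R) :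
    IntegrableOn (fun r : ℝ => r ^ q) (Ioc 0 R) ∧
      ∫ r in Ioc 0 R, r ^ q = R ^ (q + 1) / (q + 1) := by
  constructor
  · rw [← intervalIntegrable_iff_integrableOn_Ioc_of_le hR.le]
    exact intervalIntegral.intervalIntegrable_rpow' hq
  · rw [← intervalIntegral.integral_of_le hR.le, integral_rpow (Or.inl hq),
      Real.zero_rpow (by linarith : q + 1 ≠ 0)]
    ring

lemma psiBO_near (b t x R : ℝ) (hb : b ∈ Set.Ioo (0:ℝ) 1) (hR : 0 < R) :
    IntegrableOn (psiBO b t x) (Ioc 0 R) ∧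
      ∫ r in Ioc 0 R, psiBO b t x r ≤
        2 * t ^ 2 * (4 * x ^ 2 * (R ^ (2 - 2 * b) / (2 - 2 * b)) + R ^ (4 - 2 * b) / (4 - 2 * b)) := by
  obtain ⟨hb0, hb1⟩ := hb
  have hq1 : (-1:ℝ) < 1 - 2 * b := by linarith
  have hq2 : (-1:ℝ) < 3 - 2 * b := by linarith
  obtain ⟨int1, val1⟩ := rpow_integral_Ioc hq1 hR
  obtain ⟨int2, val2⟩ := rpow_integral_Ioc hq2 hR
  have inth1 : IntegrableOn
      (fun r : ℝ => 2 * t ^ 2 * (4 * x ^ 2 * r ^ (1 - 2 * b) + r ^ (3 - 2 * b))) (Ioc 0 R) :=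
    (((int1.const_mul (4 * x ^ 2)).add int2).const_mul (2 * t ^ 2))
  have intpsi : IntegrableOn (psiBO b t x) (Ioc 0 R) := by
    refine Integrable.mono' inth1 ((measurable_psiBO b t x).aestronglyMeasurable.restrict) ?_
    refine (ae_restrict_iff' measurableSet_Ioc).2 (ae_of_all _ fun r hr => ?_)
    rw [Real.norm_of_nonneg (psiBO_nonneg hr.1.le)]
    exact psiBO_le_near hr.1
  refine ⟨intpsi, ?_⟩
  have step : ∫ r in Ioc 0 R, psiBO b t x r ≤
      ∫ r in Ioc 0 R, 2 * t ^ 2 * (4 * x ^ 2 * r ^ (1 - 2 * b) + r ^ (3 - 2 * b)) :=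
    setIntegral_mono_on intpsi inth1 measurableSet_Ioc (fun r hr => psiBO_le_near hr.1)
  refine step.trans (le_of_eq ?_)
  rw [integral_const_mul, integral_add (int1.const_mul (4 * x ^ 2)) int2, integral_const_mul,
    val1, val2]
  have e1 : (1 - 2 * b) + 1 = 2 - 2 * b := by ring
  have e2 : (3 - 2 * b) + 1 = 4 - 2 * b := by ring
  rw [e1, e2]

lemma psiBO_far (b t x R : ℝ) (hb : b ∈ Set.Ioo (0:ℝ) 1) (hR : 0 < R) :
    IntegrableOn (psiBO b t x) (Ioi R) ∧
      ∫ r in Ioi R, psiBO b t x r ≤ 4 * (R ^ (-(2 * b)) / (2 * b)) := by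
  obtain ⟨hb0, hb1⟩ := hb
  have ha : (-(1 + 2 * b) : ℝ) < -1 := by linarith
  have intfar : IntegrableOn (fun r : ℝ => (4:ℝ) * r ^ (-(1 + 2 * b))) (Ioi R) :=
    (integrableOn_Ioi_rpow_of_lt ha hR).const_mul 4
  have intpsi : IntegrableOn (psiBO b t x) (Ioi R) := by
    refine Integrable.mono' intfar ((measurable_psiBO b t x).aestronglyMeasurable.restrict) ?_
    refine (ae_restrict_iff' measurableSet_Ioi).2 (ae_of_all _ fun r hr => ?_)
    have hr0 : 0 < r := hR.trans hr
    rw [Real.norm_of_nonneg (psiBO_nonneg hr0.le)]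
    exact psiBO_le_far hr0
  refine ⟨intpsi, ?_⟩
  have step : ∫ r in Ioi R, psiBO b t x r ≤ ∫ r in Ioi R, (4:ℝ) * r ^ (-(1 + 2 * b)) :=
    setIntegral_mono_on intpsi intfar measurableSet_Ioi (fun r hr => psiBO_le_far (hR.trans hr))
  refine step.trans (le_of_eq ?_)
  rw [integral_const_mul, integral_Ioi_rpow_of_lt ha hR]
  rw [show (-(1 + 2 * b) + 1 : ℝ) = -(2 * b) by ring]
  field_simp

lemma psiBO_line (b t x R : ℝ) (hb : b ∈ Set.Ioo (0:ℝ) 1) (hR : 0 < R) :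
    Integrable (fun y : ℝ => psiBO b t x |x - y|) ∧
      ∫ y : ℝ, psiBO b t x |x - y| ≤
        2 * (2 * t ^ 2 * (4 * x ^ 2 * (R ^ (2 - 2 * b) / (2 - 2 * b)) + R ^ (4 - 2 * b) / (4 - 2 * b))
          + 4 * (R ^ (-(2 * b)) / (2 * b))) := by
  obtain ⟨intN, valN⟩ := psiBO_near b t x R hb hR
  obtain ⟨intF, valF⟩ := psiBO_far b t x R hb hR
  have hunion : Ioc (0:ℝ) R ∪ Ioi R = Ioi 0 := Ioc_union_Ioi_eq_Ioi hR.le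
  have intIoi : IntegrableOn (psiBO b t x) (Ioi 0) := by
    rw [← hunion]; exact intN.union intF
  have valIoi : ∫ r in Ioi 0, psiBO b t x r ≤
      2 * t ^ 2 * (4 * x ^ 2 * (R ^ (2 - 2 * b) / (2 - 2 * b)) + R ^ (4 - 2 * b) / (4 - 2 * b))
        + 4 * (R ^ (-(2 * b)) / (2 * b)) := by
    rw [← hunion, setIntegral_union (Ioc_disjoint_Ioi le_rfl) measurableSet_Ioi intN intF]
    exact add_le_add valN valF
  -- pass to |z|
  have hEq : EqOn (psiBO b t x) (fun z : ℝ => psiBO b t x |z|) (Ioi 0) := fun z hz => by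
    simp [abs_of_pos (mem_Ioi.1 hz)]
  have intIoiAbs : IntegrableOn (fun z : ℝ => psiBO b t x |z|) (Ioi 0) :=
    intIoi.congr_fun hEq measurableSet_Ioi
  have int_Iic : IntegrableOn (fun z : ℝ => psiBO b t x |z|) (Iic 0) := by
    rw [← Measure.map_neg_eq_self (volume : Measure ℝ)]
    have m : MeasurableEmbedding fun z : ℝ => -z := (Homeomorph.neg ℝ).measurableEmbedding
    rw [m.integrableOn_map_iff]
    simp_rw [Function.comp_def, abs_neg, neg_preimage, neg_Iic, neg_zero]
    exact Iff.mpr integrableOn_Ici_iff_integrableOn_Ioi intIoiAbs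
  have intAbs : Integrable (fun z : ℝ => psiBO b t x |z|) := by
    have h := int_Iic.union intIoiAbs
    rwa [Iic_union_Ioi, integrableOn_univ] at h
  have valAbs : ∫ z : ℝ, psiBO b t x |z| = 2 * ∫ r in Ioi 0, psiBO b t x r :=
    integral_comp_abs (f := psiBO b t x)
  -- pass to |x - y|
  have hmp : MeasurePreserving (fun y : ℝ => x - y) volume volume :=
    Measure.measurePreserving_sub_left volume x
  have hemb : MeasurableEmbedding (fun y : ℝ => x - y) :=
    (Homeomorph.subLeft x).measurableEmbedding
  have intLine : Integrable (fun y : ℝ => psiBO b t x |x - y|) := by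
    have h := (hmp.integrable_comp_emb hemb).2 intAbs
    exact h
  have valLine : ∫ y : ℝ, psiBO b t x |x - y| = ∫ z : ℝ, psiBO b t x |z| :=
    integral_sub_left_eq_self (fun z : ℝ => psiBO b t x |z|) volume x
  refine ⟨intLine, ?_⟩
  rw [valLine, valAbs]
  linarith

noncomputable def KBO (b : ℝ) : ℝ := 8 / (2 - 2 * b) + 2 / (4 - 2 * b) + 2 / b

lemma KBO_pos {b : ℝ} (hb : b ∈ Set.Ioo (0:ℝ) 1) : 0 < KBO b := by
  obtain ⟨hb0, hb1⟩ := hb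
  have h1 : (0:ℝ) < 2 - 2 * b := by linarith
  have h2 : (0:ℝ) < 4 - 2 * b := by linarith
  unfold KBO
  positivity

set_option maxHeartbeats 1000000 in
lemma psiBO_total (b t x : ℝ) (hb : b ∈ Set.Ioo (0:ℝ) 1) (ht : t ≠ 0) :
    Integrable (fun y : ℝ => psiBO b t x |x - y|) ∧
      ∫ y : ℝ, psiBO b t x |x - y| ≤
        2 * (KBO b * (|t| ^ b + (|t| * |x|) ^ (2 * b))) := by
  obtain ⟨hb0, hb1⟩ := hb
  have hd1 : (0:ℝ) < 2 - 2 * b := by linarith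
  have hd2 : (0:ℝ) < 4 - 2 * b := by linarith
  have hK : 0 < KBO b := KBO_pos ⟨hb0, hb1⟩
  set T := |t| with hTdef
  have hT : 0 < T := abs_pos.2 ht
  have ht2 : t ^ 2 = T * T := by rw [hTdef, ← sq_abs]; ring
  set u := T ^ b with hudef
  have hu : 0 < u := Real.rpow_pos_of_pos hT b
  by_cases hc : T * x ^ 2 ≤ 1
  · -- small x : R = T^{-1/2}
    set R := T ^ (-(1/2) : ℝ) with hRdef
    have hR : 0 < R := Real.rpow_pos_of_pos hT _
    obtain ⟨intL, valL⟩ := psiBO_line b t x R ⟨hb0, hb1⟩ hR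
    set M := (T * |x|) ^ (2 * b) with hMdef
    have hM0 : 0 ≤ M := Real.rpow_nonneg (by positivity) _
    have hA : R ^ (2 - 2 * b) = u / T := by
      rw [hRdef, ← Real.rpow_mul hT.le, show (-(1/2) : ℝ) * (2 - 2 * b) = b - 1 by ring,
        Real.rpow_sub hT, Real.rpow_one, hudef]
    have hB : R ^ (4 - 2 * b) = u / (T * T) := by
      rw [hRdef, ← Real.rpow_mul hT.le, show (-(1/2) : ℝ) * (4 - 2 * b) = b - 1 - 1 by ring,
        Real.rpow_sub hT, Real.rpow_sub hT, Real.rpow_one, hudef, div_div]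
    have hC : R ^ (-(2 * b)) = u := by
      rw [hRdef, ← Real.rpow_mul hT.le, show (-(1/2) : ℝ) * (-(2 * b)) = b by ring, hudef]
    rw [hA, hB, hC, ht2] at valL
    refine ⟨intL, valL.trans ?_⟩
    have e : 2 * (T * T) * (4 * x ^ 2 * ((u / T) / (2 - 2 * b)) + (u / (T * T)) / (4 - 2 * b))
        + 4 * (u / (2 * b))
        = 8 * (T * x ^ 2) * u / (2 - 2 * b) + 2 * u / (4 - 2 * b) + 2 * u / b := by
      field_simp
      ring
    have t1 : 8 * (T * x ^ 2) * u / (2 - 2 * b) ≤ 8 * u / (2 - 2 * b) := by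
      have hnum : 8 * (T * x ^ 2) * u ≤ 8 * u := by
        nlinarith [mul_nonneg hT.le (sq_nonneg x)]
      exact (div_le_div_iff_of_pos_right hd1).2 hnum
    have eK : KBO b * u = 8 * u / (2 - 2 * b) + 2 * u / (4 - 2 * b) + 2 * u / b := by
      unfold KBO; ring
    have hfin : 2 * (T * T) * (4 * x ^ 2 * ((u / T) / (2 - 2 * b)) + (u / (T * T)) / (4 - 2 * b))
        + 4 * (u / (2 * b)) ≤ KBO b * (u + M) := by
      rw [e]
      have h2 : KBO b * (u + M) = KBO b * u + KBO b * M := by ring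
      have h3 : 0 ≤ KBO b * M := mul_nonneg hK.le hM0
      linarith [t1]
    linarith
  · -- large x : R = (T|x|)^{-1}
    push_neg at hc
    have hx : x ≠ 0 := by
      intro h
      rw [h] at hc
      norm_num at hc
    set X := |x| with hXdef
    have hX : 0 < X := abs_pos.2 hx
    have hx2 : x ^ 2 = X * X := by rw [hXdef, sq, ← abs_mul_abs_self x]
    have hc' : 1 < T * (X * X) := by rw [← hx2]; exact hc
    set M0 := T * X with hM0def
    have hM0 : 0 < M0 := mul_pos hT hX
    set R := M0 ^ (-(1:ℝ)) with hRdef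
    have hR : 0 < R := Real.rpow_pos_of_pos hM0 _
    obtain ⟨intL, valL⟩ := psiBO_line b t x R ⟨hb0, hb1⟩ hR
    set v := M0 ^ (2 * b) with hvdef
    have hv : 0 < v := Real.rpow_pos_of_pos hM0 _
    have hA : R ^ (2 - 2 * b) = v / (M0 * M0) := by
      rw [hRdef, ← Real.rpow_mul hM0.le, show (-1 : ℝ) * (2 - 2 * b) = 2 * b - 1 - 1 by ring,
        Real.rpow_sub hM0, Real.rpow_sub hM0, Real.rpow_one, hvdef, div_div]
    have hB : R ^ (4 - 2 * b) = v / (M0 * M0 * M0 * M0) := by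
      rw [hRdef, ← Real.rpow_mul hM0.le,
        show (-1 : ℝ) * (4 - 2 * b) = 2 * b - 1 - 1 - 1 - 1 by ring,
        Real.rpow_sub hM0, Real.rpow_sub hM0, Real.rpow_sub hM0, Real.rpow_sub hM0,
        Real.rpow_one, hvdef, div_div, div_div, div_div]
      ring
    have hC : R ^ (-(2 * b)) = v := by
      rw [hRdef, ← Real.rpow_mul hM0.le, show (-1 : ℝ) * (-(2 * b)) = 2 * b by ring, hvdef]
    rw [hA, hB, hC, ht2, hx2, hM0def] at valL
    refine ⟨intL, valL.trans ?_⟩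
    have e : 2 * (T * T) * (4 * (X * X) * ((v / (T * X * (T * X))) / (2 - 2 * b))
          + (v / (T * X * (T * X) * (T * X) * (T * X))) / (4 - 2 * b)) + 4 * (v / (2 * b))
        = 8 * v / (2 - 2 * b) + 2 * (v / ((T * T) * ((X * X) * (X * X)))) / (4 - 2 * b)
          + 2 * v / b := by
      field_simp
      ring
    have hD : 1 ≤ (T * T) * ((X * X) * (X * X)) := by
      nlinarith [sq_nonneg (T * (X * X) - 1)]
    have t2 : 2 * (v / ((T * T) * ((X * X) * (X * X)))) / (4 - 2 * b) ≤ 2 * v / (4 - 2 * b) := by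
      have hnum : 2 * (v / ((T * T) * ((X * X) * (X * X)))) ≤ 2 * v := by
        have := div_le_self hv.le hD
        linarith
      exact (div_le_div_iff_of_pos_right hd2).2 hnum
    have eK : KBO b * v = 8 * v / (2 - 2 * b) + 2 * v / (4 - 2 * b) + 2 * v / b := by
      unfold KBO; ring
    have hfin : 2 * (T * T) * (4 * (X * X) * ((v / (T * X * (T * X))) / (2 - 2 * b))
          + (v / (T * X * (T * X) * (T * X) * (T * X))) / (4 - 2 * b)) + 4 * (v / (2 * b))
        ≤ KBO b * (u + v) := by
      rw [e]
      have h2 : KBO b * (u + v) = KBO b * u + KBO b * v := by ring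
      have h3 : 0 ≤ KBO b * u := mul_nonneg hK.le hu.le
      linarith [t2]
    linarith

lemma gnorm (t x y : ℝ) :
    ‖Complex.exp (-Complex.I * (t:ℂ) * (x:ℂ) * ((|x|:ℝ):ℂ))
        - Complex.exp (-Complex.I * (t:ℂ) * (y:ℂ) * ((|y|:ℝ):ℂ))‖
      ≤ min 2 (|t| * ((2 * |x| + |x - y|) * |x - y|)) := by
  have hx : (-Complex.I * (t:ℂ) * (x:ℂ) * ((|x|:ℝ):ℂ)) = ((-(t * x * |x|) : ℝ) : ℂ) * Complex.I := by
    push_cast; ring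
  have hy : (-Complex.I * (t:ℂ) * (y:ℂ) * ((|y|:ℝ):ℂ)) = ((-(t * y * |y|) : ℝ) : ℂ) * Complex.I := by
    push_cast; ring
  rw [hx, hy]
  refine le_min ?_ ?_
  · refine (norm_sub_le _ _).trans ?_
    have n1 : ‖Complex.exp (((-(t * x * |x|) : ℝ) : ℂ) * Complex.I)‖ = 1 := by
      rw [Complex.norm_exp_ofReal_mul_I]
    have n2 : ‖Complex.exp (((-(t * y * |y|) : ℝ) : ℂ) * Complex.I)‖ = 1 := by
      rw [Complex.norm_exp_ofReal_mul_I]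
    rw [n1, n2]
    norm_num
  · refine (norm_exp_sub_exp_le' (-(t * x * |x|)) (-(t * y * |y|))).trans ?_
    have e : |(-(t * x * |x|)) - (-(t * y * |y|))| = |t| * abs (x * |x| - y * |y|) := by
      rw [show (-(t * x * |x|)) - (-(t * y * |y|)) = t * (y * |y| - x * |x|) by ring, abs_mul,
        abs_sub_comm]
    rw [e]
    have h2 := abs_mul_abs_sub_le x y
    have h3 : |y| ≤ |x| + |x - y| := by
      have h5 := abs_sub_abs_le_abs_sub y x
      have h4 : |y - x| = |x - y| := abs_sub_comm y x
      linarith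
    calc |t| * abs (x * |x| - y * |y|) ≤ |t| * ((|x| + |y|) * |x - y|) :=
          mul_le_mul_of_nonneg_left h2 (abs_nonneg t)
      _ ≤ |t| * ((2 * |x| + |x - y|) * |x - y|) := by
          refine mul_le_mul_of_nonneg_left ?_ (abs_nonneg t)
          refine mul_le_mul_of_nonneg_right ?_ (abs_nonneg _)
          linarith


set_option maxHeartbeats 1000000 in
/-- For `b ∈ (0,1)` there is `c = c(b)` such that
`𝒟^b(e^{-itx|x|})(x) ≤ c (|t|^{b/2} + |t|^b |x|^b)` for all `t, x`. -/
theorem steinD_linear_BO_group (b : ℝ) (hb : b ∈ Set.Ioo (0 : ℝ) 1) :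
    ∃ c : ℝ, 0 < c ∧ ∀ t x : ℝ,
      steinD b (fun y : ℝ => Complex.exp (-Complex.I * (t : ℂ) * (y : ℂ) * (|y| : ℝ))) x ≤
        ENNReal.ofReal (c * (|t| ^ (b / 2) + |t| ^ b * |x| ^ b)) := by
  obtain ⟨hb0, hb1⟩ := hb
  have hK : 0 < KBO b := KBO_pos ⟨hb0, hb1⟩
  refine ⟨Real.sqrt (2 * KBO b), Real.sqrt_pos.2 (by linarith), ?_⟩
  intro t x
  by_cases ht : t = 0
  · subst ht
    have hzero : steinD b
        (fun y : ℝ => Complex.exp (-Complex.I * ((0:ℝ) : ℂ) * (y : ℂ) * (|y| : ℝ))) x = 0 := by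
      unfold steinD
      have hint : ∀ y : ℝ,
          (‖Complex.exp (-Complex.I * ((0:ℝ) : ℂ) * (x : ℂ) * ((|x|:ℝ) : ℂ))
            - Complex.exp (-Complex.I * ((0:ℝ) : ℂ) * (y : ℂ) * ((|y|:ℝ) : ℂ))‖₊ : ℝ≥0∞) ^ 2
            / ENNReal.ofReal |x - y| ^ (1 + 2 * b) = 0 := by
        intro y
        simp
      simp only [hint, lintegral_zero]
      exact ENNReal.zero_rpow_of_pos (by norm_num)
    rw [hzero]
    exact zero_le
  · have hT : 0 < |t| := abs_pos.2 ht
    obtain ⟨intL, valL⟩ := psiBO_total b t x ⟨hb0, hb1⟩ ht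
    have hpt : ∀ y : ℝ,
        (‖Complex.exp (-Complex.I * (t : ℂ) * (x : ℂ) * ((|x|:ℝ) : ℂ))
          - Complex.exp (-Complex.I * (t : ℂ) * (y : ℂ) * ((|y|:ℝ) : ℂ))‖₊ : ℝ≥0∞) ^ 2
          / ENNReal.ofReal |x - y| ^ (1 + 2 * b)
          ≤ ENNReal.ofReal (psiBO b t x |x - y|) := by
      intro y
      rcases eq_or_ne y x with rfl | hne
      · simp
      · have hr : 0 < |x - y| := abs_pos.2 (sub_ne_zero.2 (Ne.symm hne))
        set Δ := Complex.exp (-Complex.I * (t : ℂ) * (x : ℂ) * ((|x|:ℝ) : ℂ))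
          - Complex.exp (-Complex.I * (t : ℂ) * (y : ℂ) * ((|y|:ℝ) : ℂ)) with hΔ
        have hnum : (‖Δ‖₊ : ℝ≥0∞) ^ 2 = ENNReal.ofReal (‖Δ‖ ^ 2) := by
          rw [ENNReal.ofReal_pow (norm_nonneg _), ← coe_nnnorm, ENNReal.ofReal_coe_nnreal]
        have hden : ENNReal.ofReal |x - y| ^ (1 + 2 * b)
            = ENNReal.ofReal (|x - y| ^ (1 + 2 * b)) :=
          ENNReal.ofReal_rpow_of_nonneg (abs_nonneg _) (by linarith)
        rw [hnum, hden, ← ENNReal.ofReal_div_of_pos (Real.rpow_pos_of_pos hr _)]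
        apply ENNReal.ofReal_le_ofReal
        unfold psiBO
        apply (div_le_div_iff_of_pos_right (Real.rpow_pos_of_pos hr _)).2
        have hg := gnorm t x y
        rw [← hΔ] at hg
        refine le_min ?_ ?_
        · have h5 : ‖Δ‖ ≤ 2 := hg.trans (min_le_left _ _)
          nlinarith [norm_nonneg Δ]
        · have h5 : ‖Δ‖ ≤ |t| * ((2 * |x| + |x - y|) * |x - y|) := hg.trans (min_le_right _ _)
          have h6 : (|t| * ((2 * |x| + |x - y|) * |x - y|)) ^ 2
              = t ^ 2 * (2 * |x| + |x - y|) ^ 2 * |x - y| ^ 2 := by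
            rw [mul_pow, mul_pow, sq_abs, sq_abs]
            ring
          calc ‖Δ‖ ^ 2 ≤ (|t| * ((2 * |x| + |x - y|) * |x - y|)) ^ 2 :=
                pow_le_pow_left₀ (norm_nonneg _) h5 2
            _ = _ := h6
    have hmain : steinD b
        (fun y : ℝ => Complex.exp (-Complex.I * (t : ℂ) * (y : ℂ) * (|y| : ℝ))) x ≤
        (ENNReal.ofReal (2 * (KBO b * (|t| ^ b + (|t| * |x|) ^ (2 * b))))) ^ ((1:ℝ)/2) := by
      unfold steinD
      apply ENNReal.rpow_le_rpow ?_ (by norm_num)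
      calc (∫⁻ y : ℝ, (‖Complex.exp (-Complex.I * (t : ℂ) * (x : ℂ) * ((|x|:ℝ) : ℂ))
            - Complex.exp (-Complex.I * (t : ℂ) * (y : ℂ) * ((|y|:ℝ) : ℂ))‖₊ : ℝ≥0∞) ^ 2
            / ENNReal.ofReal |x - y| ^ (1 + 2 * b))
          ≤ ∫⁻ y : ℝ, ENNReal.ofReal (psiBO b t x |x - y|) := lintegral_mono hpt
        _ = ENNReal.ofReal (∫ y : ℝ, psiBO b t x |x - y|) :=
            (ofReal_integral_eq_lintegral_ofReal intL
              (Filter.Eventually.of_forall fun y => psiBO_nonneg (abs_nonneg _))).symm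
        _ ≤ ENNReal.ofReal (2 * (KBO b * (|t| ^ b + (|t| * |x|) ^ (2 * b)))) :=
            ENNReal.ofReal_le_ofReal valL
    refine hmain.trans ?_
    have hBnn : 0 ≤ 2 * (KBO b * (|t| ^ b + (|t| * |x|) ^ (2 * b))) := by
      have h1 : 0 ≤ (|t| * |x|) ^ (2 * b) := Real.rpow_nonneg (by positivity) _
      have h2 : 0 ≤ |t| ^ b := Real.rpow_nonneg (abs_nonneg t) _
      nlinarith
    rw [ENNReal.ofReal_rpow_of_nonneg hBnn (by norm_num)]
    apply ENNReal.ofReal_le_ofReal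
    rw [← Real.sqrt_eq_rpow]
    set A := |t| ^ (b / 2) with hAdef
    set C := |t| ^ b * |x| ^ b with hCdef
    have hAn : 0 ≤ A := Real.rpow_nonneg (abs_nonneg t) _
    have hCn : 0 ≤ C := mul_nonneg (Real.rpow_nonneg (abs_nonneg t) _)
      (Real.rpow_nonneg (abs_nonneg x) _)
    have hA2 : A ^ 2 = |t| ^ b := by
      rw [hAdef, ← Real.rpow_natCast (|t| ^ (b / 2)) 2, ← Real.rpow_mul (abs_nonneg t)]
      congr 1
      push_cast
      ring
    have hC2 : C ^ 2 = (|t| * |x|) ^ (2 * b) := by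
      rw [hCdef, mul_pow, ← Real.rpow_natCast (|t| ^ b) 2, ← Real.rpow_natCast (|x| ^ b) 2,
        ← Real.rpow_mul (abs_nonneg t), ← Real.rpow_mul (abs_nonneg x),
        ← Real.mul_rpow (abs_nonneg t) (abs_nonneg x)]
      congr 1
      push_cast
      ring
    have hc2 : (Real.sqrt (2 * KBO b)) ^ 2 = 2 * KBO b := Real.sq_sqrt (by linarith)
    have key : 2 * (KBO b * (|t| ^ b + (|t| * |x|) ^ (2 * b)))
        ≤ (Real.sqrt (2 * KBO b) * (A + C)) ^ 2 := by
      have expand : (Real.sqrt (2 * KBO b) * (A + C)) ^ 2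
          = 2 * KBO b * (A ^ 2 + C ^ 2) + 2 * KBO b * (2 * A * C) := by
        rw [mul_pow, hc2]
        ring
      rw [expand, hA2, hC2]
      have h7 : 0 ≤ 2 * KBO b * (2 * A * C) := by positivity
      linarith
    have h8 := Real.sqrt_le_sqrt key
    rwa [Real.sqrt_sq (by positivity)] at h8
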